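/- arXiv:2505.08623 — 3 statements merged into one kernel-verified Lean document; each statement's English description precedes it below -/
import Mathlib

section
/- For z ∈ ℂ, the M-Wright function with parameter β = 1/2 equals the Gaussian kernel: M_{1/2}(z) = (1/√π)·exp(−z²/4). -/
open scoped Nat

/-- The M-Wright function `M_β(z) = ∑_{n≥0} (-z)^n / (n! Γ(-βn + 1 - β))`. -/
noncomputable def MWright (β : ℝ) (z : ℂ) : ℂ :=
  ∑' n : ℕ, (-z) ^ n / ((n ! : ℂ) * Complex.Gamma (-(β : ℂ) * n + 1 - β))

lemma gamma_half_sub_nat (k : ℕ) :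
    Complex.Gamma (1 / 2 - k) =
      (Real.sqrt Real.pi : ℂ) * (-4) ^ k * (k ! : ℂ) / ((2 * k)! : ℂ) := by
  induction k with
  | zero =>
      rw [show (1 / 2 - (0 : ℕ) : ℂ) = ((1 / 2 : ℝ) : ℂ) by norm_num,
        Complex.Gamma_ofReal, Real.Gamma_one_half_eq]
      norm_num
  | succ k ih =>
      have hs : (1 / 2 : ℂ) - ((k + 1 : ℕ) : ℂ) ≠ 0 := by
        rw [show (1 / 2 : ℂ) - ((k + 1 : ℕ) : ℂ) = ((1 / 2 - ((k + 1 : ℕ) : ℝ) : ℝ) : ℂ) by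
          push_cast; ring, Complex.ofReal_ne_zero]
        have : (0 : ℝ) ≤ k := k.cast_nonneg
        push_cast; intro h; linarith
      have hrec := Complex.Gamma_add_one _ hs
      have harg : (1 / 2 : ℂ) - ((k + 1 : ℕ) : ℂ) + 1 = 1 / 2 - k := by push_cast; ring
      rw [harg, ih] at hrec
      have hfac : ((2 * (k + 1))! : ℂ) = (2 * k + 2) * ((2 * k + 1) * ((2 * k)! : ℂ)) := by
        have : (2 * (k + 1))! = (2 * k + 2) * ((2 * k + 1) * (2 * k)!) := by
          rw [show 2 * (k + 1) = (2 * k + 1) + 1 by ring, Nat.factorial_succ, Nat.factorial_succ]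
        rw [this]; push_cast; ring
      have hf1 : ((2 * k)! : ℂ) ≠ 0 := Nat.cast_ne_zero.2 (Nat.factorial_ne_zero _)
      have hfs : (((k + 1))! : ℂ) = ((k : ℂ) + 1) * (k ! : ℂ) := by
        rw [Nat.factorial_succ]; push_cast; ring
      have hden : ((2 * (k + 1))! : ℂ) ≠ 0 := Nat.cast_ne_zero.2 (Nat.factorial_ne_zero _)
      rw [eq_div_iff hden, hfac, hfs]
      rw [div_eq_iff hf1] at hrec
      push_cast at hrec ⊢
      linear_combination (4 * ((k : ℂ) + 1)) * hrec

theorem mWright_half (z : ℂ) :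
    MWright (1 / 2) z = (1 / Real.sqrt Real.pi : ℝ) * Complex.exp (-z ^ 2 / 4) := by
  have hπ : Real.sqrt Real.pi ≠ 0 := by positivity
  set f : ℕ → ℂ := fun n =>
    (-z) ^ n / ((n ! : ℂ) * Complex.Gamma (-((1 / 2 : ℝ) : ℂ) * n + 1 - ((1 / 2 : ℝ) : ℂ)))
    with hf
  have hinj : Function.Injective (fun k : ℕ => 2 * k) := fun a b h => by
    simp only [] at h; omega
  have hsupp : Function.support f ⊆ Set.range (fun k : ℕ => 2 * k) := by
    intro n hn
    by_contra hmem
    apply hn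
    have hodd : ∃ k, n = 2 * k + 1 := by
      rcases Nat.even_or_odd n with ⟨k, hk⟩ | ⟨k, hk⟩
      · refine absurd ⟨k, ?_⟩ hmem
        show 2 * k = n; omega
      · exact ⟨k, hk⟩
    obtain ⟨k, rfl⟩ := hodd
    have harg : -((1 / 2 : ℝ) : ℂ) * ((2 * k + 1 : ℕ) : ℂ) + 1 - ((1 / 2 : ℝ) : ℂ)
        = -(k : ℂ) := by push_cast; ring
    show f (2 * k + 1) = 0
    rw [hf]
    simp only []
    rw [harg, Complex.Gamma_neg_nat_eq_zero, mul_zero, div_zero]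
  have hkey : ∀ k : ℕ, f (2 * k) =
      (1 / Real.sqrt Real.pi : ℝ) * ((-z ^ 2 / 4) ^ k / (k ! : ℂ)) := by
    intro k
    have harg : -((1 / 2 : ℝ) : ℂ) * ((2 * k : ℕ) : ℂ) + 1 - ((1 / 2 : ℝ) : ℂ)
        = 1 / 2 - k := by push_cast; ring
    have hpow : (-z) ^ (2 * k) = (z ^ 2) ^ k := by
      rw [neg_pow, pow_mul, pow_mul]; simp [neg_one_sq]
    rw [hf]
    simp only []
    rw [harg, hpow, gamma_half_sub_nat]
    have hf1 : ((2 * k)! : ℂ) ≠ 0 := Nat.cast_ne_zero.2 (Nat.factorial_ne_zero _)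
    have hf2 : ((k)! : ℂ) ≠ 0 := Nat.cast_ne_zero.2 (Nat.factorial_ne_zero _)
    have hπ' : ((Real.sqrt Real.pi : ℝ) : ℂ) ≠ 0 := by exact_mod_cast hπ
    have h4 : ((-4 : ℂ)) ^ k ≠ 0 := pow_ne_zero _ (by norm_num)
    have hneg : (-z ^ 2 / 4) ^ k = (z ^ 2) ^ k / (-4 : ℂ) ^ k := by
      rw [← div_pow]; congr 1; ring
    rw [hneg, mul_comm ((2 * k)! : ℂ), div_mul_cancel₀ _ hf1]
    push_cast
    field_simp
  calc MWright (1 / 2) z = ∑' n, f n := by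
        rw [MWright]
    _ = ∑' k : ℕ, f (2 * k) := (hinj.tsum_eq hsupp).symm
    _ = (1 / Real.sqrt Real.pi : ℝ) * ∑' k : ℕ, (-z ^ 2 / 4) ^ k / (k ! : ℂ) := by
        rw [← tsum_mul_left]; exact tsum_congr hkey
    _ = (1 / Real.sqrt Real.pi : ℝ) * Complex.exp (-z ^ 2 / 4) := by
        rw [Complex.exp_eq_exp_ℂ, NormedSpace.exp_eq_tsum_div]
end

section
/- For a generalised grey Brownian motion B^{β,α}, all odd moments vanish and the even moments satisfy E[(B^{β,α}_t)^{2n}] = (2n)!·t^{nα} / (2^n·Γ(βn+1)) for every n ∈ ℕ and t ≥ 0. -/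
open scoped Nat
open MeasureTheory ProbabilityTheory

section GgBmAux
open Real
open scoped NNReal ENNReal

lemma gamma_nat_add_half (n : ℕ) :
    Real.Gamma ((n : ℝ) + 1/2) = ((2*n)! : ℝ) * Real.sqrt π / (4^n * (n ! : ℝ)) := by
  induction n with
  | zero => rw [show ((0:ℕ):ℝ) + 1/2 = 1/2 by norm_num, Real.Gamma_one_half_eq]; norm_num
  | succ n ih =>
    have h0 : ((n : ℝ) + 1/2) ≠ 0 := by positivity
    have : ((n + 1 : ℕ) : ℝ) + 1/2 = ((n : ℝ) + 1/2) + 1 := by push_cast; ring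
    rw [this, Real.Gamma_add_one h0, ih]
    have h1 : 2 * (n + 1) = (2 * n + 1) + 1 := by ring
    rw [h1, Nat.factorial_succ, Nat.factorial_succ, Nat.factorial_succ]
    have hn : (n ! : ℝ) ≠ 0 := Nat.cast_ne_zero.mpr (Nat.factorial_ne_zero n)
    field_simp
    push_cast
    ring

lemma gauss_odd (v : ℝ≥0) (n : ℕ) :
    ∫ x : ℝ, x ^ (2*n+1) ∂(gaussianReal 0 v) = 0 := by
  by_cases hv : v = 0
  · subst hv; rw [gaussianReal_zero_var, integral_dirac]; simp
  rw [gaussianReal_of_var_ne_zero 0 hv]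
  have hmeas : Measurable fun x : ℝ => (gaussianPDFReal 0 v x).toNNReal :=
    (measurable_gaussianPDFReal 0 v).real_toNNReal
  have hd : gaussianPDF 0 v = fun x => ((gaussianPDFReal 0 v x).toNNReal : ℝ≥0∞) := by
    ext x; rfl
  rw [hd, integral_withDensity_eq_integral_smul hmeas]
  have hsmul : ∀ x : ℝ, (gaussianPDFReal 0 v x).toNNReal • (x ^ (2*n+1)) =
      gaussianPDFReal 0 v x * x ^ (2*n+1) := by
    intro x
    rw [NNReal.smul_def, smul_eq_mul, Real.coe_toNNReal _ (gaussianPDFReal_nonneg 0 v x)]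
  simp_rw [hsmul]
  set f : ℝ → ℝ := fun x => gaussianPDFReal 0 v x * x ^ (2*n+1) with hf
  have hodd : ∀ x, f (-x) = - f x := by
    intro x
    simp only [hf, gaussianPDFReal]
    rw [Odd.neg_pow ⟨n, by ring⟩]
    ring_nf
  have h1 : ∫ x, f x = ∫ x, f (-x) := by
    conv_lhs => rw [← Measure.map_neg_eq_self (volume : Measure ℝ)]
    exact (Homeomorph.neg ℝ).measurableEmbedding.integral_map _
  have h2 : ∫ x, f (-x) = - ∫ x, f x := by
    simp_rw [hodd]; exact integral_neg f
  have := h1.trans h2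
  linarith

lemma gauss_even (v : ℝ≥0) (n : ℕ) :
    ∫ x : ℝ, x ^ (2*n) ∂(gaussianReal 0 v) =
      ((2*n)! : ℝ) * (v:ℝ)^n / (2^n * (n ! : ℝ)) := by
  by_cases hv : v = 0
  · subst hv
    rw [gaussianReal_zero_var, integral_dirac]
    rcases Nat.eq_zero_or_pos n with hn | hn
    · subst hn; simp
    · rw [zero_pow (by omega), NNReal.coe_zero, zero_pow hn.ne', mul_zero, zero_div]
  have hs : 0 < (v:ℝ) := by positivity
  rw [gaussianReal_of_var_ne_zero 0 hv]
  have hmeas : Measurable fun x : ℝ => (gaussianPDFReal 0 v x).toNNReal :=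
    (measurable_gaussianPDFReal 0 v).real_toNNReal
  have hd : gaussianPDF 0 v = fun x => ((gaussianPDFReal 0 v x).toNNReal : ℝ≥0∞) := by
    ext x; rfl
  rw [hd, integral_withDensity_eq_integral_smul hmeas]
  have hsmul : ∀ x : ℝ, (gaussianPDFReal 0 v x).toNNReal • (x ^ (2*n)) =
      (Real.sqrt (2 * π * v))⁻¹ *
        (|x| ^ ((2*n : ℕ) : ℝ) * Real.exp (-(2*(v:ℝ))⁻¹ * |x| ^ (2:ℝ))) := by
    intro x
    rw [NNReal.smul_def, smul_eq_mul, Real.coe_toNNReal _ (gaussianPDFReal_nonneg 0 v x)]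
    simp only [gaussianPDFReal, Real.rpow_natCast, Real.rpow_two, sq_abs, pow_mul, sub_zero]
    rw [show -(2*(v:ℝ))⁻¹ * x^2 = -x^2/(2*(v:ℝ)) by ring]
    ring
  simp_rw [hsmul]
  rw [integral_const_mul, integral_comp_abs
    (f := fun x => x ^ ((2*n:ℕ):ℝ) * Real.exp (-(2*(v:ℝ))⁻¹ * x ^ (2:ℝ)))]
  rw [integral_rpow_mul_exp_neg_mul_rpow (by norm_num) (lt_of_lt_of_le neg_one_lt_zero (Nat.cast_nonneg _)) (by positivity)]
  have hw : (0:ℝ) < 2 * (v:ℝ) := by positivity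
  have he : -((((2*n:ℕ):ℝ)) + 1) / 2 = -((n:ℝ) + 1/2) := by push_cast; ring
  have hg : ((((2*n:ℕ):ℝ)) + 1) / 2 = (n:ℝ) + 1/2 := by push_cast; ring
  rw [he, hg, gamma_nat_add_half, Real.inv_rpow hw.le, ← Real.rpow_neg hw.le, neg_neg,
    Real.rpow_add hw, Real.rpow_natCast, ← Real.sqrt_eq_rpow,
    show 2*π*(v:ℝ) = (2*(v:ℝ))*π by ring, Real.sqrt_mul hw.le,
    mul_pow, show (4:ℝ) = 2*2 by norm_num, mul_pow]
  have h1 : Real.sqrt (2*(v:ℝ)) ≠ 0 := by positivity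
  have h2 : Real.sqrt π ≠ 0 := by positivity
  have h3 : ((n ! : ℕ) : ℝ) ≠ 0 := Nat.cast_ne_zero.mpr (Nat.factorial_ne_zero n)
  field_simp


end GgBmAux

theorem ggBm_moments {Ω : Type*} [MeasurableSpace Ω]
    (μ : Measure Ω) [IsProbabilityMeasure μ]
    (β α : ℝ) (hβ : β ∈ Set.Ioc (0 : ℝ) 1) (hα : α ∈ Set.Ioo (0 : ℝ) 2)
    (Y : Ω → ℝ) (hYmeas : Measurable Y) (hYpos : ∀ ω, 0 ≤ Y ω)
    (hYmom : ∀ κ : ℝ, -1 < κ →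
      ∫ ω, Y ω ^ κ ∂μ = Real.Gamma (1 + κ) / Real.Gamma (1 + β * κ))
    (G : Ω → ℝ) (hGmeas : Measurable G) (t : ℝ) (ht : 0 ≤ t)
    (hGgauss : Measure.map G μ = gaussianReal 0 (Real.toNNReal (t ^ α)))
    (hindep : IndepFun Y G μ) :
    (∀ n : ℕ, ∫ ω, (Real.sqrt (Y ω) * G ω) ^ (2 * n + 1) ∂μ = 0) ∧
    (∀ n : ℕ, ∫ ω, (Real.sqrt (Y ω) * G ω) ^ (2 * n) ∂μ =
      ((2 * n)! : ℝ) * t ^ (n * α) / (2 ^ n * Real.Gamma (β * n + 1))) := by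
  have key : ∀ k : ℕ, ∫ ω, (Real.sqrt (Y ω) * G ω) ^ k ∂μ =
      (∫ ω, Real.sqrt (Y ω) ^ k ∂μ) * ∫ x : ℝ, x ^ k ∂(gaussianReal 0 (Real.toNNReal (t ^ α))) := by
    intro k
    have hGk : ∫ ω, G ω ^ k ∂μ = ∫ x : ℝ, x ^ k ∂(gaussianReal 0 (Real.toNNReal (t ^ α))) := by
      rw [← hGgauss]
      exact (integral_map (f := fun x : ℝ => x ^ k) hGmeas.aemeasurable
        (Measurable.aestronglyMeasurable (by fun_prop))).symm
    rw [← hGk]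
    have hi : IndepFun (fun ω => Real.sqrt (Y ω) ^ k) (fun ω => G ω ^ k) μ :=
      hindep.comp ((Real.continuous_sqrt.measurable.pow_const k)) (measurable_id.pow_const k)
    have := hi.integral_mul_eq_mul_integral
      (((Real.continuous_sqrt.measurable.comp hYmeas).pow_const k).aestronglyMeasurable)
      (((hGmeas).pow_const k).aestronglyMeasurable)
    simp_rw [mul_pow]
    exact this
  have hYm : ∀ n : ℕ, ∫ ω, Real.sqrt (Y ω) ^ (2 * n) ∂μ =
      (n ! : ℝ) / Real.Gamma (β * n + 1) := by
    intro n
    have h1 : ∀ ω, Real.sqrt (Y ω) ^ (2 * n) = Y ω ^ ((n : ℝ)) := by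
      intro ω
      rw [pow_mul, Real.sq_sqrt (hYpos ω), ← Real.rpow_natCast]
    simp_rw [h1]
    rw [hYmom (n : ℝ) (lt_of_lt_of_le neg_one_lt_zero (Nat.cast_nonneg _)),
      add_comm (1:ℝ) (n:ℝ), Real.Gamma_nat_eq_factorial, add_comm (1:ℝ) (β * n),
      add_comm (β * (n:ℝ)) 1]
  constructor
  · intro n
    rw [key, gauss_odd, mul_zero]
  · intro n
    rw [key, gauss_even, hYm]
    have hv : ((Real.toNNReal (t ^ α)) : ℝ) = t ^ α :=
      Real.coe_toNNReal _ (Real.rpow_nonneg ht α)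
    rw [hv, ← Real.rpow_natCast (t ^ α) n, ← Real.rpow_mul ht, mul_comm α (n:ℝ)]
    have hΓ : Real.Gamma (β * n + 1) ≠ 0 := by
      have : 0 < Real.Gamma (β * n + 1) :=
        Real.Gamma_pos_of_pos (by nlinarith [mul_nonneg hβ.1.le (Nat.cast_nonneg (α := ℝ) n)])
      exact this.ne'
    have h3 : ((n ! : ℕ) : ℝ) ≠ 0 := Nat.cast_ne_zero.mpr (Nat.factorial_ne_zero n)
    field_simp
end

section
/- For 0 < H < 1 and 0 ≤ t < s, the Riemann–Liouville Volterra covariance satisfies ∫₀^t (t−u)^{H−1/2}(s−u)^{H−1/2} du = s^{H−1/2}·t^{H+1/2}/(H+1/2) · ₂F₁(−(H−1/2), 1, H+3/2, t/s), where ₂F₁ is the Gauss hypergeometric function. -/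
open scoped Nat

/-- The Gauss hypergeometric function `₂F₁(a,b;c;z)` as a series. -/
noncomputable def gaussHypergeometric (a b c z : ℝ) : ℝ :=
  ∑' n : ℕ, ((ascPochhammer ℝ n).eval a * (ascPochhammer ℝ n).eval b) /
    ((ascPochhammer ℝ n).eval c * (n ! : ℝ)) * z ^ n

open MeasureTheory Real Set Filter intervalIntegral

namespace RLaux


/-- binomial coefficient `(x)_n / n!`. -/
noncomputable def C (x : ℝ) (n : ℕ) : ℝ := (ascPochhammer ℝ n).eval x / n !

lemma C_zero (x : ℝ) : C x 0 = 1 := by simp [C]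

lemma C_succ (x : ℝ) (n : ℕ) : (n + 1 : ℝ) * C x (n + 1) = (x + n) * C x n := by
  have h : (ascPochhammer ℝ (n+1)).eval x = (ascPochhammer ℝ n).eval x * (x + n) :=
    ascPochhammer_succ_eval n x
  have hn : ((n+1)! : ℝ) = (n+1) * n ! := by
    rw [Nat.factorial_succ]; push_cast; ring
  have h1 : ((n:ℝ)+1) ≠ 0 := by positivity
  have h2 : (n ! : ℝ) ≠ 0 := by positivity
  rw [C, C, h, hn]
  field_simp

lemma abs_poch_le {x : ℝ} (hx : |x| ≤ 1) (n : ℕ) :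
    |(ascPochhammer ℝ n).eval x| ≤ n ! := by
  induction n with
  | zero => simp
  | succ n ih =>
    rw [ascPochhammer_succ_eval, abs_mul]
    have h1 : |x + n| ≤ (n : ℝ) + 1 := by
      have := abs_add_le x n
      have : |x + (n:ℝ)| ≤ |x| + (n:ℝ) := by
        simpa [abs_of_nonneg (show (0:ℝ) ≤ (n:ℝ) by positivity)] using abs_add_le x (n:ℝ)
      linarith
    calc |(ascPochhammer ℝ n).eval x| * |x + n| ≤ (n ! : ℝ) * ((n:ℝ)+1) := by
          apply mul_le_mul ih h1 (abs_nonneg _) (by positivity)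
      _ = ((n+1)! : ℝ) := by rw [Nat.factorial_succ]; push_cast; ring

lemma abs_C_le {x : ℝ} (hx : |x| ≤ 1) (n : ℕ) : |C x n| ≤ 1 := by
  rw [C, abs_div, abs_of_nonneg (show (0:ℝ) ≤ (n ! : ℝ) by positivity)]
  rw [div_le_one (by positivity)]
  exact abs_poch_le hx n

lemma poch_ge_factorial {x : ℝ} (hx : 1 ≤ x) (n : ℕ) :
    (n ! : ℝ) ≤ (ascPochhammer ℝ n).eval x := by
  induction n with
  | zero => simp
  | succ n ih =>
    rw [ascPochhammer_succ_eval]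
    have h1 : (n:ℝ) + 1 ≤ x + n := by linarith
    calc ((n+1)! : ℝ) = (n ! : ℝ) * ((n:ℝ)+1) := by rw [Nat.factorial_succ]; push_cast; ring
      _ ≤ (ascPochhammer ℝ n).eval x * (x + n) := by
          apply mul_le_mul ih h1 (by positivity) ((le_trans (by positivity) ih).trans le_rfl)

lemma poch_succ_left (x : ℝ) (n : ℕ) :
    (ascPochhammer ℝ (n+1)).eval x = x * (ascPochhammer ℝ n).eval (x + 1) := by
  rw [ascPochhammer_succ_left]
  simp [Polynomial.eval_comp]

lemma summable_C_mul_pow {x z : ℝ} (hx : |x| ≤ 1) (hz : |z| < 1) :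
    Summable (fun n : ℕ => C x n * z ^ n) := by
  apply Summable.of_norm_bounded (summable_geometric_of_lt_one (abs_nonneg z) hz)
  intro n
  rw [norm_mul, norm_pow, Real.norm_eq_abs, Real.norm_eq_abs]
  calc |C x n| * |z| ^ n ≤ 1 * |z| ^ n := by
        apply mul_le_mul_of_nonneg_right (abs_C_le hx n) (by positivity)
    _ = |z| ^ n := one_mul _

lemma summable_nC {x z : ℝ} (hx : |x| ≤ 1) (hz : |z| < 1) :
    Summable (fun n : ℕ => C x n * ((n : ℝ) * z ^ (n - 1))) := by
  have hu : Summable (fun n : ℕ => (n : ℝ) * |z| ^ (n - 1)) := by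
    rw [← summable_nat_add_iff 1]
    have h1 : Summable (fun n : ℕ => (n : ℝ) ^ 1 * |z| ^ n) :=
      summable_pow_mul_geometric_of_norm_lt_one 1 (by rwa [Real.norm_eq_abs, abs_abs])
    have h2 : Summable (fun n : ℕ => |z| ^ n) :=
      summable_geometric_of_lt_one (abs_nonneg z) hz
    apply (h1.add h2).congr
    intro n
    simp only [Nat.add_sub_cancel]
    push_cast
    ring
  apply Summable.of_norm_bounded hu
  intro n
  rw [norm_mul, Real.norm_eq_abs, Real.norm_eq_abs]
  calc |C x n| * |(n : ℝ) * z ^ (n-1)| ≤ 1 * |(n:ℝ) * z ^ (n-1)| :=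
        mul_le_mul_of_nonneg_right (abs_C_le hx n) (abs_nonneg _)
    _ = |(n:ℝ)| * |z|^(n-1) := by rw [one_mul, abs_mul, abs_pow]
    _ = (n:ℝ) * |z|^(n-1) := by rw [Nat.abs_cast]

lemma tsum_binomial {a : ℝ} (ha : |a| ≤ 1) {w : ℝ} (hw0 : 0 ≤ w) (hw1 : w < 1) :
    HasSum (fun n : ℕ => C (-a) n * w ^ n) ((1 - w) ^ a) := by
  have ha' : |(-a)| ≤ 1 := by rwa [abs_neg]
  set r : ℝ := (1 + w) / 2 with hr
  have hr0 : 0 < r := by positivity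
  have hr1 : r < 1 := by rw [hr]; linarith
  have hwr : w < r := by rw [hr]; linarith
  set g : ℝ → ℝ := fun z => ∑' n : ℕ, C (-a) n * z ^ n with hgdef
  -- derivative of g on Ioo (-r) r
  have hderivg : ∀ y ∈ Ioo (-r) r,
      HasDerivAt g (∑' n : ℕ, C (-a) n * ((n : ℝ) * y ^ (n - 1))) y := by
    intro y hy
    have hu : Summable (fun n : ℕ => (n : ℝ) * r ^ (n - 1)) := by
      rw [← summable_nat_add_iff 1]
      have h1 : Summable (fun n : ℕ => (n : ℝ) ^ 1 * r ^ n) :=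
        summable_pow_mul_geometric_of_norm_lt_one 1
          (by rw [Real.norm_eq_abs, abs_of_pos hr0]; exact hr1)
      have h2 : Summable (fun n : ℕ => r ^ n) := summable_geometric_of_lt_one hr0.le hr1
      apply (h1.add h2).congr
      intro n
      simp only [Nat.add_sub_cancel]
      push_cast
      ring
    apply hasDerivAt_tsum_of_isPreconnected hu (isOpen_Ioo (a := -r) (b := r))
      (convex_Ioo _ _).isPreconnected
      (g := fun (n : ℕ) (z : ℝ) => C (-a) n * z ^ n)
      (g' := fun (n : ℕ) (z : ℝ) => C (-a) n * ((n : ℝ) * z ^ (n - 1)))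
      (y₀ := 0) ?_ ?_ ?_ ?_ hy
    · intro n z _
      simpa using (hasDerivAt_pow n z).const_mul (C (-a) n)
    · intro n z hz
      have hz' : |z| ≤ r := by
        rw [abs_le]; exact ⟨hz.1.le, hz.2.le⟩
      rw [norm_mul, Real.norm_eq_abs, Real.norm_eq_abs, abs_mul, Nat.abs_cast, abs_pow]
      calc |C (-a) n| * ((n:ℝ) * |z| ^ (n-1)) ≤ 1 * ((n:ℝ) * r ^ (n-1)) := by
            apply mul_le_mul (abs_C_le ha' n)
            · exact mul_le_mul_of_nonneg_left (pow_le_pow_left₀ (abs_nonneg z) hz' _) (by positivity)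
            · positivity
            · norm_num
        _ = (n:ℝ) * r ^ (n-1) := one_mul _
    · exact ⟨by linarith, hr0⟩
    · exact summable_C_mul_pow ha' (by rw [abs_zero]; norm_num)
  -- the ODE
  have hODE : ∀ y ∈ Ioo (-r) r,
      (1 - y) * (∑' n : ℕ, C (-a) n * ((n : ℝ) * y ^ (n - 1))) = -a * g y := by
    intro y hy
    have hyr : |y| < 1 := by
      rw [abs_lt]; constructor
      · nlinarith [hy.1]
      · nlinarith [hy.2]
    have s1 : Summable (fun n : ℕ => C (-a) n * ((n : ℝ) * y ^ (n - 1))) := summable_nC ha' hyr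
    have s0 : Summable (fun n : ℕ => C (-a) n * y ^ n) := summable_C_mul_pow ha' hyr
    have s2 : Summable (fun n : ℕ => (-a + (n:ℝ)) * C (-a) n * y ^ n) := by
      apply Summable.of_norm_bounded (g := fun n : ℕ => (1 + (n:ℝ)) * |y| ^ n)
      · have h1 : Summable (fun n : ℕ => (n : ℝ) ^ 1 * |y| ^ n) :=
          summable_pow_mul_geometric_of_norm_lt_one 1 (by rwa [Real.norm_eq_abs, abs_abs])
        have h2 : Summable (fun n : ℕ => |y| ^ n) := summable_geometric_of_lt_one (abs_nonneg y) hyr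
        apply (h2.add h1).congr
        intro n; push_cast; ring
      · intro n
        rw [norm_mul, norm_mul, Real.norm_eq_abs, Real.norm_eq_abs, Real.norm_eq_abs, abs_pow]
        have hb : |(-a) + (n:ℝ)| ≤ 1 + (n:ℝ) := by
          calc |(-a) + (n:ℝ)| ≤ |(-a)| + |(n:ℝ)| := abs_add_le _ _
            _ ≤ 1 + n := by rw [Nat.abs_cast]; linarith
        calc |(-a) + (n:ℝ)| * |C (-a) n| * |y| ^ n ≤ ((1 + (n:ℝ)) * 1) * |y| ^ n := by
              apply mul_le_mul_of_nonneg_right _ (by positivity)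
              exact mul_le_mul hb (abs_C_le ha' n) (abs_nonneg _) (by positivity)
          _ = (1 + (n:ℝ)) * |y| ^ n := by ring
    have s3 : Summable (fun n : ℕ => (n:ℝ) * C (-a) n * y ^ n) := by
      have := s2.sub (s0.mul_left (-a))
      apply this.congr
      intro n; ring
    -- reindex S
    have hS : (∑' n : ℕ, C (-a) n * ((n : ℝ) * y ^ (n - 1)))
        = ∑' n : ℕ, (-a + (n:ℝ)) * C (-a) n * y ^ n := by
      rw [s1.tsum_eq_zero_add]
      simp only [Nat.cast_zero, zero_mul, mul_zero, zero_add]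
      apply tsum_congr
      intro n
      have hrec := C_succ (-a) n
      push_cast
      rw [show C (-a) (n+1) * (((n:ℝ)+1) * y ^ n) = (((n:ℝ)+1) * C (-a) (n+1)) * y ^ n from by ring,
        hrec]
    have hyS : y * (∑' n : ℕ, C (-a) n * ((n : ℝ) * y ^ (n - 1)))
        = ∑' n : ℕ, (n:ℝ) * C (-a) n * y ^ n := by
      rw [← tsum_mul_left]
      apply tsum_congr
      intro n
      cases n with
      | zero => simp
      | succ m =>
        have h1 : y ^ (m + 1 - 1) = y ^ m := by norm_num
        rw [h1, pow_succ]
        push_cast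
        ring
    rw [sub_mul, one_mul, hyS, hS, ← s2.tsum_sub s3]
    have : -a * g y = ∑' n : ℕ, -a * (C (-a) n * y ^ n) := tsum_mul_left.symm
    rw [this]
    apply tsum_congr
    intro n
    ring
  -- h := g * (1-.)^(-a) is constant on [0, w]
  have hsub : Icc (0:ℝ) w ⊆ Ioo (-r) r := fun y hy =>
    ⟨by have := hy.1; linarith, lt_of_le_of_lt hy.2 hwr⟩
  have hder : ∀ y ∈ Icc (0:ℝ) w, HasDerivAt (fun z => g z * (1 - z) ^ (-a)) 0 y := by
    intro y hy
    have hy' := hsub hy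
    have h1y : 0 < 1 - y := by have h2 := hy'.2; have : y < 1 := lt_trans h2 hr1; linarith
    have hgd := hderivg y hy'
    have hrpow : HasDerivAt (fun z : ℝ => (1 - z) ^ (-a)) (a * (1 - y) ^ (-a - 1)) y := by
      have h := Real.hasDerivAt_rpow_const (x := 1 - y) (p := -a) (Or.inl (ne_of_gt h1y))
      have hc : HasDerivAt (fun z : ℝ => 1 - z) (-1) y := (hasDerivAt_id y).const_sub 1
      have h2 := h.comp y hc
      refine h2.congr_deriv ?_
      ring
    have hprod := hgd.mul hrpow
    refine hprod.congr_deriv (Eq.symm ?_)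
    have hode := hODE y hy'
    have hrw : (1 - y) ^ (-a) = (1 - y) ^ (-a - 1) * (1 - y) := by
      rw [← Real.rpow_add_one (ne_of_gt h1y)]
      ring_nf
    have hzero : (1 - y) * (∑' n : ℕ, C (-a) n * ((n : ℝ) * y ^ (n - 1))) + a * g y = 0 := by
      rw [hode]; ring
    calc (0:ℝ) = (1 - y) ^ (-a - 1) *
          ((1 - y) * (∑' n : ℕ, C (-a) n * ((n : ℝ) * y ^ (n - 1))) + a * g y) := by
            rw [hzero]; ring
      _ = (∑' n : ℕ, C (-a) n * ((n : ℝ) * y ^ (n - 1))) * (1 - y) ^ (-a) +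
          g y * (a * (1 - y) ^ (-a - 1)) := by rw [hrw]; ring
  have hconst := constant_of_has_deriv_right_zero
    (f := fun z => g z * (1 - z) ^ (-a)) (a := 0) (b := w)
    (fun y hy => ((hder y hy).continuousAt).continuousWithinAt)
    (fun y hy => ((hder y (Ico_subset_Icc_self hy)).hasDerivWithinAt))
  have hw : g w * (1 - w) ^ (-a) = g 0 * (1 - 0) ^ (-a) := hconst w (right_mem_Icc.mpr hw0)
  have hg0 : g 0 = 1 := by
    show (∑' n : ℕ, C (-a) n * (0:ℝ) ^ n) = 1
    rw [tsum_eq_single 0 (fun n hn => by rw [zero_pow hn, mul_zero])]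
    rw [pow_zero, mul_one, C_zero]
  rw [hg0, sub_zero, Real.one_rpow, mul_one] at hw
  have h1w : 0 < 1 - w := by linarith
  have hne : (0:ℝ) < (1 - w) ^ a := Real.rpow_pos_of_pos h1w a
  have hgw : g w = (1 - w) ^ a := by
    rw [Real.rpow_neg h1w.le] at hw
    field_simp at hw
    exact hw
  exact (summable_C_mul_pow ha' (by rw [abs_of_nonneg hw0]; exact hw1)).hasSum_iff.mpr hgw

lemma II_aux {t b : ℝ} (hb : -1 < b) (n : ℕ) :
    IntervalIntegrable (fun u => u ^ n * (t - u) ^ b) volume 0 t := by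
  have h2 : IntervalIntegrable (fun u : ℝ => (t - u) ^ b) volume 0 t := by
    have h1 : IntervalIntegrable (fun x : ℝ => x ^ b) volume 0 t :=
      intervalIntegrable_rpow' hb
    simpa using (h1.comp_sub_left t).symm
  have := h2.continuousOn_mul (g := fun u : ℝ => u ^ n)
    (by exact (continuous_pow n).continuousOn)
  exact this

lemma integral_pow_mul_rpow {t : ℝ} (ht : 0 < t) :
    ∀ (n : ℕ) (b : ℝ), -1 < b →
    ∫ u in (0:ℝ)..t, u ^ n * (t - u) ^ b
      = (n ! : ℝ) * t ^ ((n:ℝ) + b + 1) / (ascPochhammer ℝ (n+1)).eval (b+1) := by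
  intro n
  induction n with
  | zero =>
    intro b hb
    have hb1 : (0:ℝ) < b + 1 := by linarith
    have : ∫ u in (0:ℝ)..t, u ^ 0 * (t - u) ^ b = ∫ u in (0:ℝ)..t, (t - u) ^ b := by
      apply intervalIntegral.integral_congr
      intro u hu; simp
    rw [this]
    rw [intervalIntegral.integral_comp_sub_left (fun x : ℝ => x ^ b) t]
    rw [sub_self, sub_zero]
    rw [integral_rpow (Or.inl hb)]
    rw [Real.zero_rpow (by linarith : b + 1 ≠ 0)]
    simp only [ascPochhammer_one, Polynomial.eval_X, Nat.factorial_zero, Nat.cast_one,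
      Nat.cast_zero]
    rw [sub_zero, one_mul, zero_add]
    norm_num
  | succ n ih =>
    intro b hb
    have hb1 : (0:ℝ) < b + 1 := by linarith
    -- FTC for φ u = u^(n+1) * (t-u)^(b+1)
    have hcont : ContinuousOn (fun u : ℝ => u ^ (n+1) * (t - u) ^ (b+1)) (Icc 0 t) := by
      apply ContinuousOn.mul (Continuous.continuousOn (continuous_pow (n+1)))
      apply ContinuousOn.rpow_const
      · exact (continuous_const.sub continuous_id).continuousOn
      · intro u _; right; linarith
    have hderiv : ∀ u ∈ Ioo (0:ℝ) t, HasDerivAt (fun u : ℝ => u ^ (n+1) * (t - u) ^ (b+1))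
        (((n:ℝ)+1) * u ^ n * (t - u) ^ (b+1) - (b+1) * (u ^ (n+1) * (t - u) ^ b)) u := by
      intro u hu
      have htu : 0 < t - u := by linarith [hu.2]
      have h1 : HasDerivAt (fun u : ℝ => u ^ (n+1)) (((n:ℝ)+1) * u ^ n) u := by
        simpa using hasDerivAt_pow (n+1) u
      have h2 : HasDerivAt (fun u : ℝ => (t - u) ^ (b+1)) (-((b+1) * (t - u) ^ b)) u := by
        have hr := Real.hasDerivAt_rpow_const (x := t - u) (p := b + 1) (Or.inl htu.ne')
        have hc : HasDerivAt (fun z : ℝ => t - z) (-1) u := (hasDerivAt_id u).const_sub t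
        have := hr.comp u hc
        refine this.congr_deriv ?_
        ring_nf
      have := h1.mul h2
      refine this.congr_deriv ?_
      ring
    have hint : IntervalIntegrable
        (fun u => ((n:ℝ)+1) * u ^ n * (t - u) ^ (b+1) - (b+1) * (u ^ (n+1) * (t - u) ^ b))
        volume 0 t := by
      simp_rw [mul_assoc]
      apply IntervalIntegrable.sub
      · exact (II_aux (by linarith : (-1:ℝ) < b + 1) n (t := t)).const_mul ((n:ℝ)+1)
      · exact (II_aux hb (n+1) (t := t)).const_mul (b+1)
    have hftc := intervalIntegral.integral_eq_sub_of_hasDerivAt_of_le ht.le hcont hderiv hint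
    have hzero : ∫ u in (0:ℝ)..t,
        (((n:ℝ)+1) * u ^ n * (t - u) ^ (b+1) - (b+1) * (u ^ (n+1) * (t - u) ^ b)) = 0 := by
      rw [hftc, sub_self, Real.zero_rpow (by linarith : b + 1 ≠ 0), mul_zero,
        zero_pow (Nat.succ_ne_zero n), zero_mul, sub_zero]
    have h1 : IntervalIntegrable (fun u => ((n:ℝ)+1) * u ^ n * (t - u) ^ (b+1)) volume 0 t := by
      have := (II_aux (by linarith : (-1:ℝ) < b + 1) n (t := t)).const_mul ((n:ℝ)+1)
      simpa only [← mul_assoc] using this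
    have h2 : IntervalIntegrable (fun u => (b+1) * (u ^ (n+1) * (t - u) ^ b)) volume 0 t :=
      (II_aux hb (n+1) (t := t)).const_mul (b+1)
    rw [intervalIntegral.integral_sub h1 h2] at hzero
    simp_rw [mul_assoc] at hzero
    rw [intervalIntegral.integral_const_mul, intervalIntegral.integral_const_mul] at hzero
    have key : (b+1) * ∫ u in (0:ℝ)..t, u ^ (n+1) * (t - u) ^ b
        = ((n:ℝ)+1) * ∫ u in (0:ℝ)..t, u ^ n * (t - u) ^ (b+1) := by
      linarith [hzero]
    have hbne : (b:ℝ) + 1 ≠ 0 := by linarith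
    have hP : (0:ℝ) < (ascPochhammer ℝ (n+1)).eval (b+2) :=
      ascPochhammer_pos _ _ (by linarith)
    have hI : ∫ u in (0:ℝ)..t, u ^ (n+1) * (t - u) ^ b
        = ((n:ℝ)+1) * (∫ u in (0:ℝ)..t, u ^ n * (t - u) ^ (b+1)) / (b+1) := by
      rw [eq_div_iff hbne]
      linarith [key]
    rw [hI, ih (b+1) (by linarith)]
    rw [poch_succ_left (b+1) (n+1)]
    have hexp : ((n+1:ℕ):ℝ) + b + 1 = (n:ℝ) + (b+1) + 1 := by push_cast; ring
    rw [hexp]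
    have hfac : ((n+1)! : ℝ) = ((n:ℝ)+1) * (n ! : ℝ) := by
      rw [Nat.factorial_succ]; push_cast; ring
    rw [hfac]
    have hb2 : (b:ℝ) + 1 + 1 = b + 2 := by ring
    rw [hb2]
    field_simp


end RLaux

open MeasureTheory Real Set Filter RLaux in
theorem RL_Volterra_covariance (H : ℝ) (hH : H ∈ Set.Ioo (0 : ℝ) 1)
    (t s : ℝ) (ht : 0 ≤ t) (hts : t < s) :
    ∫ u in (0 : ℝ)..t, (t - u) ^ (H - 1/2) * (s - u) ^ (H - 1/2) =
      s ^ (H - 1/2) * t ^ (H + 1/2) / (H + 1/2) *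
        gaussHypergeometric (-(H - 1/2)) 1 (H + 3/2) (t / s) := by
  obtain ⟨hH0, hH1⟩ := hH
  rcases eq_or_lt_of_le ht with h0 | ht0
  · -- t = 0
    rw [← h0]
    rw [intervalIntegral.integral_same]
    rw [Real.zero_rpow (by linarith : H + 1/2 ≠ 0)]
    ring
  · -- t > 0
    have hs : (0:ℝ) < s := lt_trans ht0 hts
    set a : ℝ := H - 1/2 with hadef
    have ha1 : -1 < a := by rw [hadef]; linarith
    have haabs : |a| ≤ 1 := by rw [abs_le, hadef]; constructor <;> linarith
    have ha1' : (0:ℝ) < a + 1 := by linarith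
    set x : ℝ := t / s with hxdef
    have hx0 : 0 < x := div_pos ht0 hs
    have hx1 : x < 1 := (div_lt_one hs).mpr hts
    -- the summands
    set K : ℕ → ℝ := fun n => C (-a) n * s ^ a / s ^ n with hKdef
    set f : ℕ → ℝ → ℝ := fun n u => K n * (u ^ n * (t - u) ^ a) with hfdef
    -- pointwise expansion
    have hpt : ∀ u ∈ Ioc (0:ℝ) t, (t - u) ^ a * (s - u) ^ a = ∑' n : ℕ, f n u := by
      intro u hu
      have hu0 : 0 < u := hu.1
      have hut : u ≤ t := hu.2
      have hus : u < s := lt_of_le_of_lt hut hts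
      have hw0 : 0 ≤ u / s := by positivity
      have hw1 : u / s < 1 := (div_lt_one hs).mpr hus
      have hbin := (tsum_binomial haabs hw0 hw1).tsum_eq
      have hs_u : s - u = s * (1 - u / s) := by field_simp
      have h1 : (s - u) ^ a = s ^ a * (1 - u / s) ^ a := by
        rw [hs_u, Real.mul_rpow hs.le (by rw [sub_nonneg]; exact hw1.le)]
      rw [h1, ← hbin]
      rw [← tsum_mul_left, ← tsum_mul_left]
      apply tsum_congr
      intro n
      rw [hfdef, hKdef]
      simp only [div_pow]
      have hsn : (s:ℝ) ^ n ≠ 0 := by positivity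
      field_simp
    -- integrability of each summand
    have hfint : ∀ n : ℕ, IntegrableOn (f n) (Ioc (0:ℝ) t) volume := by
      intro n
      have h := II_aux ha1 n (t := t)
      rw [intervalIntegrable_iff_integrableOn_Ioc_of_le ht] at h
      exact h.const_mul (K n)
    -- exact value of the basic integrals
    have hval : ∀ n : ℕ, ∫ u in Ioc (0:ℝ) t, u ^ n * (t - u) ^ a
        = (n ! : ℝ) * t ^ ((n:ℝ) + a + 1) / (ascPochhammer ℝ (n+1)).eval (a+1) := by
      intro n
      rw [← intervalIntegral.integral_of_le ht]
      exact integral_pow_mul_rpow ht0 n a ha1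
    -- norm integrals
    have hnorm : ∀ n : ℕ, (∫ u in Ioc (0:ℝ) t, ‖f n u‖)
        = |K n| * ((n ! : ℝ) * t ^ ((n:ℝ) + a + 1) / (ascPochhammer ℝ (n+1)).eval (a+1)) := by
      intro n
      rw [← hval n, ← MeasureTheory.integral_const_mul]
      apply setIntegral_congr_fun measurableSet_Ioc
      intro u hu
      have h1 : (0:ℝ) ≤ u ^ n := pow_nonneg hu.1.le n
      have h2 : (0:ℝ) ≤ (t - u) ^ a := Real.rpow_nonneg (by linarith [hu.2] : (0:ℝ) ≤ t - u) a
      simp only [hfdef, Real.norm_eq_abs, abs_mul]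
      rw [abs_of_nonneg h1, abs_of_nonneg h2]
    have hbound : ∀ n : ℕ, (∫ u in Ioc (0:ℝ) t, ‖f n u‖)
        ≤ (s ^ a * t ^ (a+1) / (a+1)) * x ^ n := by
      intro n
      rw [hnorm n]
      have hP : (0:ℝ) < (ascPochhammer ℝ (n+1)).eval (a+1) := ascPochhammer_pos _ _ ha1'
      have hsn : (0:ℝ) < s ^ n := by positivity
      have hKb : |K n| ≤ s ^ a / s ^ n := by
        simp only [hKdef, abs_div, abs_mul]
        rw [abs_of_nonneg (Real.rpow_nonneg hs.le a), abs_of_nonneg hsn.le]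
        gcongr
        calc |C (-a) n| * s ^ a ≤ 1 * s ^ a := by
              apply mul_le_mul_of_nonneg_right (abs_C_le (by rwa [abs_neg]) n)
                (Real.rpow_nonneg hs.le a)
          _ = s ^ a := one_mul _
      have htE : t ^ ((n:ℝ) + a + 1) = t ^ (a+1) * t ^ n := by
        have he : (n:ℝ) + a + 1 = (a+1) + (n:ℝ) := by ring
        rw [he, Real.rpow_add ht0, Real.rpow_natCast]
      have hPge : (a+1) * (n ! : ℝ) ≤ (ascPochhammer ℝ (n+1)).eval (a+1) := by
        rw [poch_succ_left (a+1) n]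
        have h2a : (1:ℝ) ≤ a + 1 + 1 := by linarith
        exact mul_le_mul_of_nonneg_left (poch_ge_factorial h2a n) ha1'.le
      have hVnonNeg : (0:ℝ) ≤ t ^ (a+1) * t ^ n := by positivity
      have e1 : (n ! : ℝ) * t ^ ((n:ℝ) + a + 1) / (ascPochhammer ℝ (n+1)).eval (a+1)
          ≤ t ^ (a+1) * t ^ n / (a+1) := by
        rw [htE, div_le_div_iff₀ hP ha1']
        have hfacpos : (0:ℝ) < (n ! : ℝ) := by positivity
        nlinarith [mul_le_mul_of_nonneg_left hPge hVnonNeg]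
      calc |K n| * ((n ! : ℝ) * t ^ ((n:ℝ) + a + 1) / (ascPochhammer ℝ (n+1)).eval (a+1))
          ≤ (s ^ a / s ^ n) * (t ^ (a+1) * t ^ n / (a+1)) := by
            apply mul_le_mul hKb e1 (by positivity) (by positivity)
        _ = (s ^ a * t ^ (a+1) / (a+1)) * x ^ n := by
            rw [hxdef, div_pow]
            field_simp
    have hsumnorm : Summable (fun n : ℕ => ∫ u in Ioc (0:ℝ) t, ‖f n u‖) := by
      apply Summable.of_nonneg_of_le
        (fun n => integral_nonneg (fun u => norm_nonneg _)) hbound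
      exact (summable_geometric_of_lt_one hx0.le hx1).mul_left _
    have hswap : ∑' n : ℕ, (∫ u in Ioc (0:ℝ) t, f n u) = ∫ u in Ioc (0:ℝ) t, (∑' n : ℕ, f n u) :=
      integral_tsum_of_summable_integral_norm hfint hsumnorm
    rw [intervalIntegral.integral_of_le ht]
    rw [setIntegral_congr_fun measurableSet_Ioc (fun u hu => hpt u hu)]
    rw [← hswap]
    have h12 : H + 1/2 = a + 1 := by rw [hadef]; ring
    have h32 : H + 3/2 = a + 2 := by rw [hadef]; ring
    rw [h12, h32, gaussHypergeometric, ← tsum_mul_left]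
    apply tsum_congr
    intro n
    have hfi : (∫ u in Ioc (0:ℝ) t, f n u)
        = K n * ((n ! : ℝ) * t ^ ((n:ℝ) + a + 1) / (ascPochhammer ℝ (n+1)).eval (a+1)) := by
      simp only [hfdef]
      rw [MeasureTheory.integral_const_mul, hval n]
    rw [hfi]
    rw [poch_succ_left (a+1) n]
    have h22 : a + 1 + 1 = a + 2 := by ring
    rw [h22]
    have htE : t ^ ((n:ℝ) + a + 1) = t ^ (a+1) * t ^ n := by
      have he : (n:ℝ) + a + 1 = (a+1) + (n:ℝ) := by ring
      rw [he, Real.rpow_add ht0, Real.rpow_natCast]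
    rw [htE, ascPochhammer_eval_one]
    simp only [hKdef, hxdef, C, div_pow]
    have hfac : ((n !:ℕ) : ℝ) ≠ 0 := by positivity
    have hpoch2 : (ascPochhammer ℝ n).eval (a+2) ≠ 0 :=
      (ascPochhammer_pos _ _ (by linarith)).ne'
    have hsn : (s:ℝ) ^ n ≠ 0 := by positivity
    have hsa : (0:ℝ) < s ^ a := Real.rpow_pos_of_pos hs a
    field_simp
end
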